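/- Let b ∈ ℂ, b ≠ 0, and let G, D : ℂ → ℂ be entire with Taylor coefficients γ_k = G^{(k)}(0)/k! and δ_k = D^{(k)}(0)/k!. Let G̃, D̃ be the entire functions with z·G̃(z) = G(z) − G(0) and z·D̃(z) = D(z) − D(0), define g(t) = G̃(t² − b²) + t·D̃(t² − b²), and set G₁(z) = D̃(z) + 2(z + b²)·D̃′(z) and D₁(z) = 2·G̃′(z). Then: (i) g′(t) = G₁(t² − b²) + t·D₁(t² − b²) for all t ∈ ℂ; (ii) the k-th Taylor coefficient of G₁ at 0 equals (2k+1)·δ_{k+1} + 2b²(k+1)·δ_{k+2}; (iii) the k-th Taylor coefficient of D₁ at 0 equals 2(k+1)·γ_{k+2}. -/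

import Mathlib

open Complex

private lemma ederiv {f : ℂ → ℂ} (hf : Differentiable ℂ f) : Differentiable ℂ (deriv f) := by
  have := hf.contDiff (n := (⊤ : ℕ∞))
  exact (contDiff_infty_iff_deriv.mp this).2.differentiable (by norm_num)

private lemma eiter {f : ℂ → ℂ} (hf : Differentiable ℂ f) (n : ℕ) :
    Differentiable ℂ (iteratedDeriv n f) := by
  induction n with
  | zero => simpa [iteratedDeriv_zero] using hf
  | succ n ih => rw [iteratedDeriv_succ]; exact ederiv ih

private lemma itadd {f g : ℂ → ℂ} (hf : Differentiable ℂ f) (hg : Differentiable ℂ g) (n : ℕ) :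
    iteratedDeriv n (fun z => f z + g z) = fun z => iteratedDeriv n f z + iteratedDeriv n g z := by
  induction n with
  | zero => simp [iteratedDeriv_zero]
  | succ n ih =>
      rw [iteratedDeriv_succ, ih, iteratedDeriv_succ, iteratedDeriv_succ]
      funext z
      exact deriv_add (eiter hf n z) (eiter hg n z)

private lemma itcmul (c : ℂ) {f : ℂ → ℂ} (hf : Differentiable ℂ f) (n : ℕ) :
    iteratedDeriv n (fun z => c * f z) = fun z => c * iteratedDeriv n f z := by
  induction n with
  | zero => simp [iteratedDeriv_zero]
  | succ n ih =>
      rw [iteratedDeriv_succ, ih, iteratedDeriv_succ]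
      funext z
      exact deriv_const_mul c (eiter hf n z)

private lemma mulid {f : ℂ → ℂ} (hf : Differentiable ℂ f) (n : ℕ) :
    iteratedDeriv (n + 1) (fun z => z * f z) =
      fun z => z * iteratedDeriv (n + 1) f z + ((n : ℂ) + 1) * iteratedDeriv n f z := by
  induction n with
  | zero =>
      funext z
      have h := (hasDerivAt_id' (𝕜 := ℂ) (x := z)).mul (hf z).hasDerivAt
      rw [show (1 : ℕ) = 0 + 1 from rfl, iteratedDeriv_succ, iteratedDeriv_zero,
        iteratedDeriv_succ, iteratedDeriv_zero]
      rw [show deriv (fun z => z * f z) z = _ from h.deriv]; ring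
  | succ n ih =>
      funext z
      rw [iteratedDeriv_succ, ih]
      have h1 : HasDerivAt (iteratedDeriv (n + 1) f) (iteratedDeriv (n + 1 + 1) f z) z := by
        have := (eiter hf (n + 1) z).hasDerivAt
        rwa [← iteratedDeriv_succ] at this
      have h2 : HasDerivAt (iteratedDeriv n f) (iteratedDeriv (n + 1) f z) z := by
        have := (eiter hf n z).hasDerivAt
        rwa [← iteratedDeriv_succ] at this
      have h := ((hasDerivAt_id' (𝕜 := ℂ) (x := z)).mul h1).add (h2.const_mul ((n : ℂ) + 1))
      rw [show deriv (fun z => z * iteratedDeriv (n + 1) f z + ((n : ℂ) + 1) * iteratedDeriv n f z) z = _ from h.deriv]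
      push_cast
      ring

/-- If `z * f z = F z - F 0` with `f, F` entire, then
`(n+1) * f⁽ⁿ⁾(0) = F⁽ⁿ⁺¹⁾(0)`. -/
private lemma coeff_shift {f F : ℂ → ℂ} (hf : Differentiable ℂ f)
    (h : ∀ z : ℂ, z * f z = F z - F 0) (n : ℕ) :
    ((n : ℂ) + 1) * iteratedDeriv n f 0 = iteratedDeriv (n + 1) F 0 := by
  have hfun : (fun z => z * f z) = fun z => F z - F 0 := funext h
  have h1 : iteratedDeriv (n + 1) (fun z : ℂ => F z - F 0) = iteratedDeriv (n + 1) F := by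
    have hder : (deriv fun z : ℂ => F z - F 0) = deriv F :=
      funext fun z => deriv_sub_const (𝕜 := ℂ) (F 0)
    rw [iteratedDeriv_succ', iteratedDeriv_succ', hder]
  have h2 := congrFun (mulid hf n) 0
  rw [hfun, h1] at h2
  rw [zero_mul, zero_add] at h2
  exact h2.symm

theorem bleistein_one_step_coefficients
    (b : ℂ) (hb : b ≠ 0)
    (G D : ℂ → ℂ) (hG : Differentiable ℂ G) (hD : Differentiable ℂ D)
    (γ δ : ℕ → ℂ)
    (hγ : ∀ k, γ k = iteratedDeriv k G 0 / (k.factorial : ℂ))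
    (hδ : ∀ k, δ k = iteratedDeriv k D 0 / (k.factorial : ℂ))
    (Gt Dt : ℂ → ℂ) (hGt : Differentiable ℂ Gt) (hDt : Differentiable ℂ Dt)
    (hGtEq : ∀ z : ℂ, z * Gt z = G z - G 0)
    (hDtEq : ∀ z : ℂ, z * Dt z = D z - D 0)
    (g : ℂ → ℂ)
    (hg : ∀ t : ℂ, g t = Gt (t ^ 2 - b ^ 2) + t * Dt (t ^ 2 - b ^ 2))
    (G₁ D₁ : ℂ → ℂ)
    (hG₁ : ∀ z : ℂ, G₁ z = Dt z + 2 * (z + b ^ 2) * deriv Dt z)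
    (hD₁ : ∀ z : ℂ, D₁ z = 2 * deriv Gt z) :
    (∀ t : ℂ, deriv g t = G₁ (t ^ 2 - b ^ 2) + t * D₁ (t ^ 2 - b ^ 2)) ∧
    (∀ k : ℕ, iteratedDeriv k G₁ 0 / (k.factorial : ℂ) =
      (2 * (k : ℂ) + 1) * δ (k + 1) + 2 * b ^ 2 * ((k : ℂ) + 1) * δ (k + 2)) ∧
    (∀ k : ℕ, iteratedDeriv k D₁ 0 / (k.factorial : ℂ) = 2 * ((k : ℂ) + 1) * γ (k + 2)) := by
  -- coefficients of Gt and Dt at 0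
  have hGtc : ∀ n : ℕ, iteratedDeriv n Gt 0 = (n.factorial : ℂ) * γ (n + 1) := by
    intro n
    have h1 := coeff_shift hGt hGtEq n
    rw [hγ (n + 1)]
    have hnf : ((n.factorial : ℂ)) ≠ 0 := Nat.cast_ne_zero.mpr (Nat.factorial_ne_zero _)
    have hne2 : ((n : ℂ) + 1) ≠ 0 := by
      have := Nat.cast_ne_zero (R := ℂ).mpr (Nat.succ_ne_zero n); push_cast at this; exact this
    rw [← h1, Nat.factorial_succ]
    push_cast
    field_simp
  have hDtc : ∀ n : ℕ, iteratedDeriv n Dt 0 = (n.factorial : ℂ) * δ (n + 1) := by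
    intro n
    have h1 := coeff_shift hDt hDtEq n
    rw [hδ (n + 1)]
    have hnf : ((n.factorial : ℂ)) ≠ 0 := Nat.cast_ne_zero.mpr (Nat.factorial_ne_zero _)
    have hne2 : ((n : ℂ) + 1) ≠ 0 := by
      have := Nat.cast_ne_zero (R := ℂ).mpr (Nat.succ_ne_zero n); push_cast at this; exact this
    rw [← h1, Nat.factorial_succ]
    push_cast
    field_simp
  have hDt' : Differentiable ℂ (deriv Dt) := ederiv hDt
  have hGt' : Differentiable ℂ (deriv Gt) := ederiv hGt
  refine ⟨?_, ?_, ?_⟩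
  · -- derivative of g
    intro t
    have hgfun : g = fun t => Gt (t ^ 2 - b ^ 2) + t * Dt (t ^ 2 - b ^ 2) := funext hg
    have hu : HasDerivAt (fun t : ℂ => t ^ 2 - b ^ 2) (2 * t) t := by
      simpa using (hasDerivAt_pow 2 t).sub_const (b ^ 2)
    have h1 : HasDerivAt (fun t : ℂ => Gt (t ^ 2 - b ^ 2))
        (deriv Gt (t ^ 2 - b ^ 2) * (2 * t)) t :=
      (hGt (t ^ 2 - b ^ 2)).hasDerivAt.comp t hu
    have h2 : HasDerivAt (fun t : ℂ => Dt (t ^ 2 - b ^ 2))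
        (deriv Dt (t ^ 2 - b ^ 2) * (2 * t)) t :=
      (hDt (t ^ 2 - b ^ 2)).hasDerivAt.comp t hu
    have h3 := h1.add ((hasDerivAt_id' (𝕜 := ℂ) (x := t)).mul h2)
    rw [hgfun, show deriv (fun t => Gt (t ^ 2 - b ^ 2) + t * Dt (t ^ 2 - b ^ 2)) t = _ from h3.deriv, hG₁, hD₁]
    ring
  · -- coefficients of G₁
    intro k
    have hG₁fun : G₁ = fun z => Dt z + (2 * (z * deriv Dt z) + 2 * b ^ 2 * deriv Dt z) := by
      funext z; rw [hG₁]; ring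
    have hd1 : Differentiable ℂ (fun z : ℂ => z * deriv Dt z) := differentiable_id.mul hDt'
    have hd2 : Differentiable ℂ (fun z : ℂ => 2 * (z * deriv Dt z)) := hd1.const_mul 2
    have hd3 : Differentiable ℂ (fun z : ℂ => 2 * b ^ 2 * deriv Dt z) := hDt'.const_mul _
    have key : iteratedDeriv k G₁ 0 = iteratedDeriv k Dt 0
        + 2 * iteratedDeriv k (fun z : ℂ => z * deriv Dt z) 0
        + 2 * b ^ 2 * iteratedDeriv k (deriv Dt) 0 := by
      rw [hG₁fun, itadd (g := fun z => 2 * (z * deriv Dt z) + 2 * b ^ 2 * deriv Dt z) hDt (hd2.add hd3) k]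
      have := congrFun (itadd hd2 hd3 k) 0
      simp only [this, congrFun (itcmul 2 hd1 k) 0, congrFun (itcmul (2 * b ^ 2) hDt' k) 0]
      ring
    have hderivDt : ∀ m : ℕ, iteratedDeriv m (deriv Dt) 0 = iteratedDeriv (m + 1) Dt 0 := by
      intro m; rw [iteratedDeriv_succ']
    have hkfac : ((k.factorial : ℂ)) ≠ 0 := Nat.cast_ne_zero.mpr (Nat.factorial_ne_zero _)
    cases k with
    | zero =>
        simp only [iteratedDeriv_zero] at key
        have e1 : Dt 0 = δ 1 := by simpa using hDtc 0
        have e2 : deriv Dt 0 = δ 2 := by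
          have := hDtc 1; rw [iteratedDeriv_one] at this; simpa using this
        rw [iteratedDeriv_zero, key, e1, e2]
        norm_num
    | succ m =>
        have hfac2 : (((m + 1) + 1).factorial : ℂ)
            = (((m : ℂ) + 1) + 1) * (((m + 1).factorial : ℂ)) := by
          rw [Nat.factorial_succ]; push_cast; ring
        rw [key, congrFun (mulid hDt' m) 0, hderivDt m, hderivDt (m + 1),
          hDtc (m + 1), hDtc (m + 1 + 1), hfac2]
        push_cast at hkfac ⊢
        field_simp
        ring
  · -- coefficients of D₁
    intro k
    have hD₁fun : D₁ = fun z => 2 * deriv Gt z := funext hD₁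
    have key : iteratedDeriv k D₁ 0 = 2 * iteratedDeriv (k + 1) Gt 0 := by
      rw [hD₁fun, congrFun (itcmul 2 hGt' k) 0, iteratedDeriv_succ']
    rw [key, hGtc (k + 1)]
    have : ((k + 1).factorial : ℂ) = ((k : ℂ) + 1) * (k.factorial : ℂ) := by
      rw [Nat.factorial_succ]; push_cast; ring
    rw [this]
    have hkfac : ((k.factorial : ℂ)) ≠ 0 := Nat.cast_ne_zero.mpr (Nat.factorial_ne_zero _)
    field_simp
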